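/- Fix π1 ∈ (0,1). For every p ∈ Δ, the sum of the JS losses over all class labels satisfies Σ_{i=1}^c L_JS(u, e_i; π1) ≤ Σ_{i=1}^c L_JS(p, e_i; π1) ≤ Σ_{i=1}^c L_JS(e_1, e_i; π1), where u = (1/c, …, 1/c) is the uniform distribution; i.e., the JS loss is bounded with C_L = Σ_{i=1}^c L_JS(u, e_i; π1) and C_U = Σ_{i=1}^c L_JS(e_1, e_i; π1). -/

import Mathlib

/-- Discrete Kullback–Leibler divergence `D(a ‖ b) = Σ_k a_k·log(a_k/b_k)`
(with the convention `0·log 0 = 0`, automatic since multiplication by `0`). -/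
noncomputable def klDiv {c : ℕ} (a b : Fin c → ℝ) : ℝ :=
  ∑ k, a k * Real.log (a k / b k)

/-- The `j`-th standard one-hot vector `e_j`. -/
def oneHot {c : ℕ} (j : Fin c) : Fin c → ℝ :=
  fun k => if k = j then 1 else 0

/-- The JS loss of a prediction `p` in the simplex against the one-hot label `e_j`,
with hyperparameters `π1 ∈ (0,1)` and `π2 = 1 − π1`:
`L_JS(p, e_j; π1) = (π1·D(e_j ‖ m) + π2·D(p ‖ m))/Z` where `m = π1·e_j + π2·p` and
`Z = −(1 − π1)·log(1 − π1)`. -/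
noncomputable def jsLoss {c : ℕ} (p : Fin c → ℝ) (j : Fin c) (π1 : ℝ) : ℝ :=
  (π1 * klDiv (oneHot j) (fun k => π1 * oneHot j k + (1 - π1) * p k)
      + (1 - π1) * klDiv p (fun k => π1 * oneHot j k + (1 - π1) * p k))
    / (-(1 - π1) * Real.log (1 - π1))

/-- The auxiliary function `φ(t) = π₂·t·log t − (π₁+π₂t)·log(π₁+π₂t)`. -/
noncomputable def phiJS (π1 t : ℝ) : ℝ :=
  (1 - π1) * (t * Real.log t) - (π1 + (1 - π1) * t) * Real.log (π1 + (1 - π1) * t)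

lemma phiJS_convexOn {π1 : ℝ} (h0 : 0 < π1) (h1 : π1 < 1) :
    ConvexOn ℝ (Set.Icc (0:ℝ) 1) (phiJS π1) := by
  have hπ2 : 0 < 1 - π1 := by linarith
  have hm : ∀ x : ℝ, 0 ≤ x → 0 < π1 + (1 - π1) * x := fun x hx => by nlinarith
  have ha : ∀ x : ℝ, HasDerivAt (fun t : ℝ => π1 + (1 - π1) * t) (1 - π1) x := by
    intro x
    simpa using ((hasDerivAt_id x).const_mul (1 - π1)).const_add π1
  have hd : ∀ x ∈ Set.Ioo (0:ℝ) 1, HasDerivAt (phiJS π1)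
      ((1 - π1) * (Real.log x - Real.log (π1 + (1 - π1) * x))) x := by
    intro x hx
    have h1' : HasDerivAt (fun t : ℝ => t * Real.log t) (Real.log x + 1) x :=
      Real.hasDerivAt_mul_log (ne_of_gt hx.1)
    have h2' : HasDerivAt (fun t : ℝ => (π1 + (1 - π1) * t) * Real.log (π1 + (1 - π1) * t))
        ((Real.log (π1 + (1 - π1) * x) + 1) * (1 - π1)) x := by
      have := (Real.hasDerivAt_mul_log (hm x hx.1.le).ne').comp x (ha x)
      exact this
    have : HasDerivAt (phiJS π1) ((1 - π1) * (Real.log x + 1)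
        - (Real.log (π1 + (1 - π1) * x) + 1) * (1 - π1)) x := (h1'.const_mul (1 - π1)).sub h2'
    convert this using 1
    ring
  have hg : ∀ x ∈ Set.Ioo (0:ℝ) 1,
      HasDerivAt (fun t : ℝ => (1 - π1) * (Real.log t - Real.log (π1 + (1 - π1) * t)))
        ((1 - π1) * (x⁻¹ - (π1 + (1 - π1) * x)⁻¹ * (1 - π1))) x := by
    intro x hx
    exact ((Real.hasDerivAt_log (ne_of_gt hx.1)).sub
      ((Real.hasDerivAt_log (hm x hx.1.le).ne').comp x (ha x))).const_mul (1 - π1)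
  apply convexOn_of_deriv2_nonneg (convex_Icc 0 1)
  · have h1c : Continuous fun t : ℝ => (1 - π1) * (t * Real.log t) :=
      continuous_const.mul Real.continuous_mul_log
    have h2c : Continuous fun t : ℝ => (π1 + (1 - π1) * t) * Real.log (π1 + (1 - π1) * t) :=
      Real.continuous_mul_log.comp (by continuity)
    exact (h1c.sub h2c).continuousOn
  · rw [interior_Icc]
    intro x hx
    exact ((hd x hx).differentiableAt).differentiableWithinAt
  · rw [interior_Icc]
    apply DifferentiableOn.congr (f := fun t : ℝ =>
      (1 - π1) * (Real.log t - Real.log (π1 + (1 - π1) * t)))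
    · intro x hx
      exact ((hg x hx).differentiableAt).differentiableWithinAt
    · intro x hx
      exact (hd x hx).deriv
  · rw [interior_Icc]
    intro x hx
    have hev : deriv (phiJS π1) =ᶠ[nhds x]
        (fun t : ℝ => (1 - π1) * (Real.log t - Real.log (π1 + (1 - π1) * t))) := by
      filter_upwards [isOpen_Ioo.mem_nhds hx] with y hy using (hd y hy).deriv
    have h2 : deriv^[2] (phiJS π1) x
        = (1 - π1) * (x⁻¹ - (π1 + (1 - π1) * x)⁻¹ * (1 - π1)) := by
      simp only [Function.iterate_succ, Function.iterate_zero, Function.id_comp,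
        Function.comp_apply]
      rw [hev.deriv_eq]
      exact (hg x hx).deriv
    rw [h2]
    have hmx := hm x hx.1.le
    have hkey : (π1 + (1 - π1) * x)⁻¹ * (1 - π1) ≤ x⁻¹ := by
      rw [inv_mul_eq_div, div_le_iff₀ hmx, inv_eq_one_div, div_mul_eq_mul_div,
        le_div_iff₀ hx.1]
      nlinarith [hx.1]
    nlinarith [sub_nonneg.mpr hkey]

lemma jsLoss_eq {c : ℕ} {π1 : ℝ} (h0 : 0 < π1) (h1 : π1 < 1) (p : Fin c → ℝ)
    (hp0 : ∀ i, 0 ≤ p i) (hp1 : ∑ i, p i = 1) (i : Fin c) :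
    jsLoss p i π1 = (phiJS π1 (p i) - (1 - π1) * (1 - p i) * Real.log (1 - π1)) /
      (-(1 - π1) * Real.log (1 - π1)) := by
  have hπ2 : 0 < 1 - π1 := by linarith
  have hmi : 0 < π1 + (1 - π1) * p i := by nlinarith [hp0 i]
  have hA : klDiv (oneHot i) (fun k => π1 * oneHot i k + (1 - π1) * p k)
      = -Real.log (π1 + (1 - π1) * p i) := by
    unfold klDiv oneHot
    rw [Finset.sum_eq_single i]
    · simp only [if_true, eq_self_iff_true, ite_true, one_mul, mul_one, one_div,
        Real.log_inv]
    · intro k _ hk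
      rw [if_neg hk, zero_mul]
    · intro h
      exact absurd (Finset.mem_univ i) h
  have hB : klDiv p (fun k => π1 * oneHot i k + (1 - π1) * p k)
      = p i * Real.log (p i) - p i * Real.log (π1 + (1 - π1) * p i)
        - (1 - p i) * Real.log (1 - π1) := by
    unfold klDiv oneHot
    have key : ∀ k, p k * Real.log (p k / (π1 * (if k = i then (1:ℝ) else 0) + (1 - π1) * p k))
        = (-Real.log (1 - π1)) * p k
          + (if k = i then p i * Real.log (p i) - p i * Real.log (π1 + (1 - π1) * p i)
              + p i * Real.log (1 - π1) else 0) := by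
      intro k
      by_cases hk : k = i
      · subst hk
        rw [if_pos rfl, if_pos rfl, mul_one]
        by_cases hpk : p k = 0
        · simp [hpk]
        · rw [Real.log_div hpk (ne_of_gt hmi)]
          ring
      · rw [if_neg hk, if_neg hk, mul_zero, zero_add]
        by_cases hpk : p k = 0
        · simp [hpk]
        · have : p k / ((1 - π1) * p k) = (1 - π1)⁻¹ := by
            rw [mul_comm, ← div_div, div_self hpk, one_div]
          rw [this, Real.log_inv]
          ring
    rw [Finset.sum_congr rfl (fun k _ => key k), Finset.sum_add_distrib, ← Finset.mul_sum,
      hp1, Finset.sum_ite_eq' Finset.univ i, if_pos (Finset.mem_univ i)]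
    ring
  unfold jsLoss
  rw [hA, hB]
  congr 1
  unfold phiJS
  ring

lemma jsLoss_sum {c : ℕ} {π1 : ℝ} (h0 : 0 < π1) (h1 : π1 < 1) (p : Fin c → ℝ)
    (hp0 : ∀ i, 0 ≤ p i) (hp1 : ∑ i, p i = 1) :
    ∑ i, jsLoss p i π1 = ((∑ i, phiJS π1 (p i)) - (1 - π1) * ((c:ℝ) - 1) * Real.log (1 - π1))
      / (-(1 - π1) * Real.log (1 - π1)) := by
  rw [Finset.sum_congr rfl (fun i _ => jsLoss_eq h0 h1 p hp0 hp1 i), ← Finset.sum_div]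
  congr 1
  rw [Finset.sum_sub_distrib]
  congr 1
  have : ∑ i : Fin c, (1 - π1) * (1 - p i) * Real.log (1 - π1)
      = (1 - π1) * Real.log (1 - π1) * ∑ i : Fin c, (1 - p i) := by
    rw [Finset.mul_sum]
    exact Finset.sum_congr rfl (fun i _ => by ring)
  rw [this, Finset.sum_sub_distrib, hp1, Finset.sum_const, Finset.card_univ, Fintype.card_fin]
  ring

/-- Fix `π1 ∈ (0,1)`. For every `p` in the probability simplex, the sum of
the JS losses over all class labels satisfies
`Σ_i L_JS(u, e_i; π1) ≤ Σ_i L_JS(p, e_i; π1) ≤ Σ_i L_JS(e_1, e_i; π1)`,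
where `u = (1/c, …, 1/c)` is the uniform distribution; i.e., the JS loss is bounded
with `C_L = Σ_i L_JS(u, e_i; π1)` and `C_U = Σ_i L_JS(e_1, e_i; π1)`. -/
theorem js_bounded (c : ℕ) (hc : 2 ≤ c) (π1 : ℝ) (hπ0 : 0 < π1) (hπ1 : π1 < 1)
    (p : Fin c → ℝ) (hp0 : ∀ i, 0 ≤ p i) (hp1 : ∑ i, p i = 1) :
    ∑ i, jsLoss (fun _ : Fin c => ((c : ℝ))⁻¹) i π1 ≤ ∑ i, jsLoss p i π1 ∧
      ∑ i, jsLoss p i π1 ≤ ∑ i, jsLoss (oneHot (⟨0, by omega⟩ : Fin c)) i π1 := by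
  have hπ2 : 0 < 1 - π1 := by linarith
  have hlog : Real.log (1 - π1) < 0 := Real.log_neg hπ2 (by linarith)
  have hZ : 0 < -(1 - π1) * Real.log (1 - π1) := by nlinarith
  have hcpos : 0 < c := by omega
  have hcR : (0:ℝ) < (c:ℝ) := by exact_mod_cast hcpos
  set j0 : Fin c := ⟨0, by omega⟩ with hj0
  have hu0 : ∀ i : Fin c, (0:ℝ) ≤ (fun _ : Fin c => ((c:ℝ))⁻¹) i := fun i => by positivity
  have hu1 : ∑ _i : Fin c, ((c:ℝ))⁻¹ = 1 := by
    rw [Finset.sum_const, Finset.card_univ, Fintype.card_fin, nsmul_eq_mul]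
    field_simp
  have he0 : ∀ i : Fin c, (0:ℝ) ≤ oneHot j0 i := by
    intro i
    unfold oneHot
    split <;> norm_num
  have he1 : ∑ i : Fin c, oneHot j0 i = 1 := by
    unfold oneHot
    rw [Finset.sum_ite_eq' Finset.univ j0, if_pos (Finset.mem_univ j0)]
  have hmem : ∀ i ∈ Finset.univ, p i ∈ Set.Icc (0:ℝ) 1 := by
    intro i _
    refine ⟨hp0 i, ?_⟩
    calc p i ≤ ∑ k, p k := Finset.single_le_sum (fun k _ => hp0 k) (Finset.mem_univ i)
    _ = 1 := hp1
  have hconv := phiJS_convexOn hπ0 hπ1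
  constructor
  · rw [jsLoss_sum hπ0 hπ1 p hp0 hp1, jsLoss_sum hπ0 hπ1 _ hu0 hu1]
    have key : ∑ i : Fin c, phiJS π1 ((fun _ : Fin c => ((c:ℝ))⁻¹) i)
        ≤ ∑ i, phiJS π1 (p i) := by
      have hJ := hconv.map_sum_le (t := Finset.univ) (w := fun _ : Fin c => (c:ℝ)⁻¹)
        (p := p) (fun i _ => by positivity) hu1 hmem
      have harg : ∑ i : Fin c, (c:ℝ)⁻¹ • p i = (c:ℝ)⁻¹ := by
        simp only [smul_eq_mul, ← Finset.mul_sum, hp1, mul_one]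
      rw [harg] at hJ
      simp only [smul_eq_mul, ← Finset.mul_sum] at hJ
      have : ∑ i : Fin c, phiJS π1 ((fun _ : Fin c => ((c:ℝ))⁻¹) i)
          = (c:ℝ) * phiJS π1 ((c:ℝ)⁻¹) := by
        rw [Finset.sum_const, Finset.card_univ, Fintype.card_fin, nsmul_eq_mul]
      rw [this]
      calc (c:ℝ) * phiJS π1 ((c:ℝ)⁻¹)
          ≤ (c:ℝ) * ((c:ℝ)⁻¹ * ∑ i, phiJS π1 (p i)) :=
            mul_le_mul_of_nonneg_left hJ hcR.le
        _ = ∑ i, phiJS π1 (p i) := by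
            rw [← mul_assoc, mul_inv_cancel₀ (ne_of_gt hcR), one_mul]
    gcongr
  · rw [jsLoss_sum hπ0 hπ1 p hp0 hp1, jsLoss_sum hπ0 hπ1 _ he0 he1]
    have hub : ∀ i : Fin c, phiJS π1 (p i)
        ≤ (1 - p i) * phiJS π1 0 + p i * phiJS π1 1 := by
      intro i
      have h := hconv.2 (Set.mem_Icc.mpr ⟨le_refl (0:ℝ), zero_le_one⟩)
        (Set.mem_Icc.mpr ⟨zero_le_one, le_refl (1:ℝ)⟩)
        (by linarith [(hmem i (Finset.mem_univ i)).2] : (0:ℝ) ≤ 1 - p i) (hp0 i) (by ring)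
      simpa using h
    have hsum1 : ∑ i : Fin c, ((1 - p i) * phiJS π1 0 + p i * phiJS π1 1)
        = ((c:ℝ) - 1) * phiJS π1 0 + phiJS π1 1 := by
      rw [Finset.sum_add_distrib, ← Finset.sum_mul, ← Finset.sum_mul, Finset.sum_sub_distrib,
        hp1, Finset.sum_const, Finset.card_univ, Fintype.card_fin, nsmul_eq_mul, mul_one,
        one_mul]
    have hsum2 : ∑ i : Fin c, phiJS π1 (oneHot j0 i)
        = ((c:ℝ) - 1) * phiJS π1 0 + phiJS π1 1 := by
      have hterm : ∀ i : Fin c, phiJS π1 (oneHot j0 i)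
          = phiJS π1 0 + (if i = j0 then phiJS π1 1 - phiJS π1 0 else 0) := by
        intro i
        unfold oneHot
        by_cases h : i = j0 <;> simp [h]
      rw [Finset.sum_congr rfl (fun i _ => hterm i), Finset.sum_add_distrib, Finset.sum_const,
        Finset.card_univ, Fintype.card_fin, Finset.sum_ite_eq' Finset.univ j0,
        if_pos (Finset.mem_univ j0), nsmul_eq_mul]
      ring
    have key : ∑ i, phiJS π1 (p i) ≤ ∑ i : Fin c, phiJS π1 (oneHot j0 i) := by
      rw [hsum2, ← hsum1]
      exact Finset.sum_le_sum (fun i _ => hub i)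
    gcongr
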